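/- For a planar motion (rotation about axis r with translation t satisfying rᵀ t = 0), the essential matrix E = [t]ₓ R has zero trace. -/
import Mathlib


open Matrix Real

def skew (v : Fin 3 → ℝ) : Matrix (Fin 3) (Fin 3) ℝ :=
  !![0, -v 2, v 1; v 2, 0, -v 0; -v 1, v 0, 0]

def quatRot (σ : ℝ) (u : Fin 3 → ℝ) : Matrix (Fin 3) (Fin 3) ℝ :=
  (2 : ℝ) • (vecMulVec u u - σ • skew u) + (σ ^ 2 - u ⬝ᵥ u) • (1 : Matrix (Fin 3) (Fin 3) ℝ)

noncomputable def rodrigues (θ : ℝ) (r : Fin 3 → ℝ) : Matrix (Fin 3) (Fin 3) ℝ :=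
  Real.cos θ • (1 : Matrix (Fin 3) (Fin 3) ℝ) + Real.sin θ • skew r
    + (1 - Real.cos θ) • vecMulVec r r

theorem planar_motion_trace_zero (θ : ℝ) (r t : Fin 3 → ℝ)
    (hunit : r ⬝ᵥ r = 1) (hplanar : r ⬝ᵥ t = 0) :
    (skew t * rodrigues θ r).trace = 0 := by
  have h : r 0 * t 0 + (r 1 * t 1 + r 2 * t 2) = 0 := by
    have := hplanar; simp [dotProduct, Fin.sum_univ_three] at this; linarith
  have hu : r 0 * r 0 + (r 1 * r 1 + r 2 * r 2) = 1 := by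
    have := hunit; simp [dotProduct, Fin.sum_univ_three] at this; linarith
  simp [skew, rodrigues, trace, diag, Matrix.mul_apply, Fin.sum_univ_three,
    vecMulVec_apply, Matrix.one_apply, Matrix.cons_val_zero, Matrix.cons_val_one,
    Matrix.head_cons, Matrix.cons_val_two, Matrix.tail_cons, Fin.isValue]
  linear_combination (-2*Real.sin θ) * h
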